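/- arXiv:1105.2468 — 6 statements merged into one kernel-verified Lean document; each statement's English description precedes it below -/
import Mathlib

section
/- Let m ≥ 1 and let u, v be permutations of {1,…,m} satisfying the braid relation u·v·u = v·u·v. Then the cardinality of the support of u is at most twice the cardinality of the intersection of the support of u with the support of v, i.e. |S(u)| ≤ 2·|S(u) ∩ S(v)|. -/
/-- If two permutations `u, v` of `{1,…,m}` satisfy the braid relation
`u·v·u = v·u·v`, then `|S(u)| ≤ 2·|S(u) ∩ S(v)|`. -/
theorem support_le_two_mul_inter_support (m : ℕ) (hm : 1 ≤ m)
    (u v : Equiv.Perm (Fin m)) (h : u * v * u = v * u * v) :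
    u.support.card ≤ 2 * (u.support ∩ v.support).card := by
  have key : (u.support \ v.support).card ≤ (u.support ∩ v.support).card := by
    apply Finset.card_le_card_of_injOn u
    · intro x hx
      simp only [Finset.mem_coe, Finset.mem_sdiff, Equiv.Perm.mem_support, Finset.mem_inter,
        Equiv.Perm.notMem_support] at hx ⊢
      obtain ⟨hxu, hxv⟩ := hx
      have h1 : u (v (u x)) = v (u (v x)) := by
        have := congrArg (fun p => p x) h
        simpa [Equiv.Perm.mul_apply] using this
      rw [not_not] at hxv
      rw [hxv] at h1
      constructor
      · exact fun hc => hxu (u.injective hc)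
      · intro hc
        rw [hc] at h1
        exact hxu (u.injective h1)
    · intro a _ b _ hab
      exact u.injective hab
  have := Finset.card_sdiff_add_card_inter u.support v.support
  omega
end

section
/- Let m ≥ 1, let k ∈ {2,3}, and let u, v be permutations of {1,…,m} satisfying the braid relation u·v·u = v·u·v. If every nontrivial cycle of u has length k, and every orbit of the subgroup generated by u and v on {1,…,m} has cardinality either 1 or k, then u = v. -/
private lemma set_eq_pair' {α : Type*} [Finite α] {O : Set α} {a b : α}
    (ha : a ∈ O) (hb : b ∈ O) (hab : a ≠ b) (hcard : Nat.card O = 2) : O = {a, b} := by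
  refine (Set.eq_of_subset_of_ncard_le ?_ ?_ (Set.toFinite O)).symm
  · simp [Set.insert_subset_iff, ha, hb]
  · rw [Set.ncard_insert_of_notMem (by simp [hab]), Set.ncard_singleton,
      ← Nat.card_coe_set_eq, hcard]

private lemma set_eq_triple' {α : Type*} [Finite α] {O : Set α} {a b c : α}
    (ha : a ∈ O) (hb : b ∈ O) (hc : c ∈ O) (hab : a ≠ b) (hac : a ≠ c) (hbc : b ≠ c)
    (hcard : Nat.card O = 3) : O = {a, b, c} := by
  refine (Set.eq_of_subset_of_ncard_le ?_ ?_ (Set.toFinite O)).symm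
  · simp [Set.insert_subset_iff, ha, hb, hc]
  · rw [Set.ncard_insert_of_notMem (by simp [hab, hac]),
      Set.ncard_insert_of_notMem (by simp [hbc]), Set.ncard_singleton,
      ← Nat.card_coe_set_eq, hcard]

/-- Let `k ∈ {2,3}` and let `u, v` be permutations of `{1,…,m}` satisfying the braid
relation. If all nontrivial cycles of `u` have length `k` and every orbit of `⟨u, v⟩`
has cardinality `1` or `k`, then `u = v`. -/
theorem eq_of_braid_of_cycles_eq (m k : ℕ) (hm : 1 ≤ m) (hk : k = 2 ∨ k = 3)
    (u v : Equiv.Perm (Fin m)) (h : u * v * u = v * u * v)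
    (hcyc : ∀ c ∈ u.cycleType, c = k)
    (horb : ∀ x : Fin m,
      Nat.card (MulAction.orbit (Subgroup.closure {u, v} : Subgroup (Equiv.Perm (Fin m))) x) = 1 ∨
      Nat.card (MulAction.orbit (Subgroup.closure {u, v} : Subgroup (Equiv.Perm (Fin m))) x) = k) :
    u = v := by
  have hu_mem : u ∈ Subgroup.closure ({u, v} : Set (Equiv.Perm (Fin m))) :=
    Subgroup.subset_closure (by simp)
  have hv_mem : v ∈ Subgroup.closure ({u, v} : Set (Equiv.Perm (Fin m))) :=
    Subgroup.subset_closure (by simp)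
  have hku : u ^ k = 1 := by
    refine orderOf_dvd_iff_pow_eq_one.mp ?_
    rw [← Equiv.Perm.lcm_cycleType]
    exact Multiset.lcm_dvd.mpr (fun b hb => (hcyc b hb) ▸ dvd_refl k)
  have hconj : (u * v) * u * (u * v)⁻¹ = v := by
    have h1 : (u * v) * u * (u * v)⁻¹ = (u * v * u) * v⁻¹ * u⁻¹ := by group
    rw [h1, h]; group
  have hkv : v ^ k = 1 := by
    rw [← hconj, conj_pow, hku, mul_one, mul_inv_cancel]
  have hmemO : ∀ (w : Equiv.Perm (Fin m)),
      w ∈ Subgroup.closure ({u, v} : Set (Equiv.Perm (Fin m))) → ∀ (x y : Fin m),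
      y ∈ MulAction.orbit (Subgroup.closure ({u, v} : Set (Equiv.Perm (Fin m)))) x →
      w y ∈ MulAction.orbit (Subgroup.closure ({u, v} : Set (Equiv.Perm (Fin m)))) x := by
    intro w hw x y hy
    obtain ⟨g, rfl⟩ := hy
    exact ⟨⟨w, hw⟩ * g, by simp [mul_smul]⟩
  have hbraid : ∀ x : Fin m, u (v (u x)) = v (u (v x)) := by
    intro x
    have := congrArg (fun w : Equiv.Perm (Fin m) => w x) h
    simpa [Equiv.Perm.mul_apply] using this
  apply Equiv.ext
  intro x
  by_contra hne
  have hx : x ∈ MulAction.orbit (Subgroup.closure ({u, v} : Set (Equiv.Perm (Fin m)))) x :=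
    MulAction.mem_orbit_self x
  have hux : u x ∈ _ := hmemO u hu_mem x x hx
  have hvx : v x ∈ _ := hmemO v hv_mem x x hx
  rcases horb x with hcard | hcard
  · -- orbit has one element
    have hss := (Nat.card_eq_one_iff_unique.mp hcard).1
    exact hne (Subtype.mk_eq_mk.mp (hss.elim ⟨u x, hux⟩ ⟨v x, hvx⟩))
  rcases hk with rfl | rfl
  · -- k = 2
    have hOeq := set_eq_pair' hux hvx hne hcard
    have hxmem : x ∈ ({u x, v x} : Set (Fin m)) := hOeq ▸ hx
    simp only [Set.mem_insert_iff, Set.mem_singleton_iff] at hxmem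
    rcases hxmem with hx1 | hx2
    · -- x = u x
      have hvxne : v x ≠ x := fun hh => hne (by rw [← hx1, hh])
      have huvx : u (v x) ∈ ({u x, v x} : Set (Fin m)) :=
        hOeq ▸ hmemO u hu_mem x _ hvx
      simp only [Set.mem_insert_iff, Set.mem_singleton_iff] at huvx
      rcases huvx with h1 | h1
      · exact hvxne (u.injective h1)
      · have hb := hbraid x
        rw [← hx1, h1] at hb
        exact hvxne (v.injective hb).symm
    · -- x = v x
      have huxne : u x ≠ x := fun hh => hne (by rw [← hx2, hh])
      have hvux : v (u x) ∈ ({u x, v x} : Set (Fin m)) :=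
        hOeq ▸ hmemO v hv_mem x _ hux
      simp only [Set.mem_insert_iff, Set.mem_singleton_iff] at hvux
      rcases hvux with h1 | h1
      · have hb := hbraid x
        rw [← hx2, h1] at hb
        exact huxne (u.injective hb)
      · exact huxne (v.injective h1)
  · -- k = 3
    have h3u : ∀ y, u (u (u y)) = y := by
      intro y
      have := congrArg (fun w : Equiv.Perm (Fin m) => w y) hku
      simpa [pow_succ, Equiv.Perm.mul_apply] using this
    have h3v : ∀ y, v (v (v y)) = y := by
      intro y
      have := congrArg (fun w : Equiv.Perm (Fin m) => w y) hkv
      simpa [pow_succ, Equiv.Perm.mul_apply] using this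
    by_cases hufix : u x = x
    · -- Case A : u x = x, v x ≠ x
      have hvxne : v x ≠ x := fun hh => hne (hufix.trans hh.symm)
      have hv2ne : v (v x) ≠ x := by
        intro hh
        have h3 := h3v x
        rw [hh] at h3
        exact hvxne h3
      have hvvne : v x ≠ v (v x) := fun hh => hvxne (v.injective hh).symm
      have hvvx : v (v x) ∈ _ := hmemO v hv_mem x _ hvx
      have hOeq := set_eq_triple' hx hvx hvvx (Ne.symm hvxne) (Ne.symm hv2ne) hvvne hcard
      have huvx : u (v x) ∈ ({x, v x, v (v x)} : Set (Fin m)) :=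
        hOeq ▸ hmemO u hu_mem x _ hvx
      simp only [Set.mem_insert_iff, Set.mem_singleton_iff] at huvx
      rcases huvx with h1 | h1 | h1
      · exact hvxne (u.injective (h1.trans hufix.symm))
      · -- u (v x) = v x
        have hb := hbraid x
        rw [hufix, h1] at hb
        exact hvvne hb
      · -- u (v x) = v (v x)
        have huv2 : u (v (v x)) ∈ ({x, v x, v (v x)} : Set (Fin m)) :=
          hOeq ▸ hmemO u hu_mem x _ hvvx
        simp only [Set.mem_insert_iff, Set.mem_singleton_iff] at huv2
        rcases huv2 with h2 | h2 | h2
        · exact hv2ne (u.injective (h2.trans hufix.symm))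
        · -- u (v (v x)) = v x : contradicts u³ = 1
          have h3 := h3u (v x)
          rw [h1, h2, h1] at h3
          exact hvvne h3.symm
        · exact hvvne (u.injective (h1.trans h2.symm))
    · -- u x ≠ x : the points x, u x, u (u x) are distinct
      have hu2ne : u (u x) ≠ x := by
        intro hh
        have h3 := h3u x
        rw [hh] at h3
        exact hufix h3
      have huune : u x ≠ u (u x) := fun hh => hufix (u.injective hh).symm
      have huux : u (u x) ∈ _ := hmemO u hu_mem x _ hux
      have hOeq := set_eq_triple' hx hux huux (Ne.symm hufix) (Ne.symm hu2ne) huune hcard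
      by_cases hvfix : v x = x
      · -- Case B : v x = x, u x ≠ x
        have hvux : v (u x) ∈ ({x, u x, u (u x)} : Set (Fin m)) :=
          hOeq ▸ hmemO v hv_mem x _ hux
        simp only [Set.mem_insert_iff, Set.mem_singleton_iff] at hvux
        rcases hvux with h1 | h1 | h1
        · exact hufix (v.injective (h1.trans hvfix.symm))
        · -- v (u x) = u x
          have hb := hbraid x
          rw [hvfix, h1] at hb
          exact huune hb.symm
        · -- v (u x) = u (u x)
          have hvu2 : v (u (u x)) ∈ ({x, u x, u (u x)} : Set (Fin m)) :=
            hOeq ▸ hmemO v hv_mem x _ huux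
          simp only [Set.mem_insert_iff, Set.mem_singleton_iff] at hvu2
          rcases hvu2 with h2 | h2 | h2
          · exact hu2ne (v.injective (h2.trans hvfix.symm))
          · -- v (u (u x)) = u x : contradicts v³ = 1
            have h3 := h3v (u x)
            rw [h1, h2, h1] at h3
            exact huune h3.symm
          · exact huune (v.injective (h1.trans h2.symm))
      · -- Case C : u x ≠ x, v x ≠ x, u x ≠ v x
        have hvx3 : v x ∈ ({x, u x, u (u x)} : Set (Fin m)) := hOeq ▸ hvx
        simp only [Set.mem_insert_iff, Set.mem_singleton_iff] at hvx3
        rcases hvx3 with h0 | h0 | h0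
        · exact hvfix h0
        · exact hne h0.symm
        -- h0 : v x = u (u x)
        have hvux : v (u x) ∈ ({x, u x, u (u x)} : Set (Fin m)) :=
          hOeq ▸ hmemO v hv_mem x _ hux
        simp only [Set.mem_insert_iff, Set.mem_singleton_iff] at hvux
        rcases hvux with h1 | h1 | h1
        · -- v (u x) = x : braid forces u x = v x
          have hb := hbraid x
          rw [h1, h0, h3u x] at hb
          exact hne hb
        · -- v (u x) = u x
          have hvu2 : v (u (u x)) ∈ ({x, u x, u (u x)} : Set (Fin m)) :=
            hOeq ▸ hmemO v hv_mem x _ huux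
          simp only [Set.mem_insert_iff, Set.mem_singleton_iff] at hvu2
          rcases hvu2 with h2 | h2 | h2
          · -- v (u (u x)) = x, i.e. v (v x) = x : contradicts v³ = 1
            have h3 := h3v x
            rw [h0, h2] at h3
            exact hvfix h3
          · exact huune (v.injective (h1.trans h2.symm))
          · -- v (u (u x)) = u (u x) : then v (v x) = v x
            have hvv : v (v x) = v x := by rw [h0]; exact h2
            exact hvfix (v.injective hvv)
        · -- v (u x) = u (u x) = v x
          exact hufix (v.injective (h1.trans h0.symm))
end

section
/- Let m ≥ 1 and let u, v₀, v₁ be permutations of {1,…,m} such that: (a) u·vᵢ·u = vᵢ·u·vᵢ for i = 0,1; (b) v₀ and v₁ commute. If u³ = 1 and every orbit of the subgroup generated by u and v₀ on {1,…,m}, as well as every orbit of the subgroup generated by u and v₁, has cardinality either 1 or 4, then v₀ = v₁. -/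
set_option maxRecDepth 10000 in
lemma fin4_braid_cube : ∀ σ τ : Equiv.Perm (Fin 4),
    σ * σ * σ = 1 → σ * τ * σ = τ * σ * τ → (σ * τ) * (σ * τ) * (σ * τ) = 1 := by decide

lemma subtypePerm_congr {α : Type*} {p : α → Prop} (f g : Equiv.Perm α)
    (hf : ∀ x, p (f x) ↔ p x) (hg : ∀ x, p (g x) ↔ p x) (h : f = g) :
    f.subtypePerm hf = g.subtypePerm hg := by subst h; rfl

lemma permCongr_mul {α β : Type*} (e : α ≃ β) (p q : Equiv.Perm α) :
    e.permCongr (p * q) = e.permCongr p * e.permCongr q := by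
  ext z
  simp [Equiv.Perm.mul_apply]

lemma braid_cube {m : ℕ} (u v : Equiv.Perm (Fin m))
    (hbr : u * v * u = v * u * v) (hu3 : u * u * u = 1)
    (horb : ∀ x : Fin m,
      Nat.card (MulAction.orbit (Subgroup.closure {u, v} : Subgroup (Equiv.Perm (Fin m))) x) = 1 ∨
      Nat.card (MulAction.orbit (Subgroup.closure {u, v} : Subgroup (Equiv.Perm (Fin m))) x) = 4) :
    (u * v) * (u * v) * (u * v) = 1 := by
  ext x
  set P : Subgroup (Equiv.Perm (Fin m)) := Subgroup.closure {u, v} with hP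
  have huP : u ∈ P := Subgroup.subset_closure (by simp)
  have hvP : v ∈ P := Subgroup.subset_closure (by simp)
  set O : Set (Fin m) := MulAction.orbit P x with hO
  have hfwd : ∀ w : Equiv.Perm (Fin m), w ∈ P → ∀ y, y ∈ O → w y ∈ O := by
    intro w hw y hy
    rcases hy with ⟨p, rfl⟩
    exact ⟨⟨w, hw⟩ * p, rfl⟩
  have hinv : ∀ w : Equiv.Perm (Fin m), w ∈ P → ∀ y, y ∈ O ↔ w y ∈ O := by
    intro w hw y
    constructor
    · exact hfwd w hw y
    · intro h
      have := hfwd w⁻¹ (inv_mem hw) (w y) h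
      simpa using this
  have hxO : x ∈ O := MulAction.mem_orbit_self x
  have hgP : (u * v) * (u * v) * (u * v) ∈ P :=
    mul_mem (mul_mem (mul_mem huP hvP) (mul_mem huP hvP)) (mul_mem huP hvP)
  rcases horb x with h1 | h4
  · -- orbit of size 1
    have hsub : Subsingleton O := (Nat.card_eq_one_iff_unique.mp h1).1
    have hmem : ((u * v) * (u * v) * (u * v)) x ∈ O := hfwd _ hgP x hxO
    have h := @Subsingleton.elim O hsub ⟨_, hmem⟩ ⟨x, hxO⟩
    exact congrArg Fin.val (congrArg Subtype.val h)
  · -- orbit of size 4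
    letI : Fintype O := Fintype.ofFinite _
    have hcard : Fintype.card O = 4 := by rw [← Nat.card_eq_fintype_card]; exact h4
    let e : O ≃ Fin 4 := Fintype.equivFinOfCardEq hcard
    let σ : Equiv.Perm O := u.subtypePerm (fun y => (hinv u huP y).symm)
    let τ : Equiv.Perm O := v.subtypePerm (fun y => (hinv v hvP y).symm)
    have hσ3 : σ * σ * σ = 1 := by
      simp only [σ, Equiv.Perm.subtypePerm_mul]
      refine (subtypePerm_congr _ _ ?_ (fun _ => Iff.rfl) hu3).trans
        (Equiv.Perm.subtypePerm_one _ _)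
      exact fun y => (hinv _ (mul_mem (mul_mem huP huP) huP) y).symm
    have hbrs : σ * τ * σ = τ * σ * τ := by
      simp only [σ, τ, Equiv.Perm.subtypePerm_mul]
      refine subtypePerm_congr _ _ ?_ ?_ hbr
      · exact fun y => (hinv _ (mul_mem (mul_mem huP hvP) huP) y).symm
      · exact fun y => (hinv _ (mul_mem (mul_mem hvP huP) hvP) y).symm
    have key : (σ * τ) * (σ * τ) * (σ * τ) = 1 := by
      have h1' : e.permCongr σ * e.permCongr σ * e.permCongr σ = 1 := by
        rw [← permCongr_mul, ← permCongr_mul, hσ3]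
        ext z; simp
      have h2' : e.permCongr σ * e.permCongr τ * e.permCongr σ
          = e.permCongr τ * e.permCongr σ * e.permCongr τ := by
        rw [← permCongr_mul, ← permCongr_mul, ← permCongr_mul, ← permCongr_mul, hbrs]
      have h3' := fin4_braid_cube (e.permCongr σ) (e.permCongr τ) h1' h2'
      have h4' : e.permCongr ((σ * τ) * (σ * τ) * (σ * τ)) = e.permCongr 1 := by
        rw [permCongr_mul, permCongr_mul, permCongr_mul, h3']
        ext z; simp
      exact e.permCongr.injective h4'
    exact congrArg Fin.val (congrArg (fun (p : Equiv.Perm O) => (p ⟨x, hxO⟩ : O).1) key)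

/-- Let `u, v₀, v₁` be permutations of `{1,…,m}` with `u·vᵢ·u = vᵢ·u·vᵢ` for `i = 0, 1`,
and `v₀`, `v₁` commuting. If `u³ = 1` and all orbits of `⟨u, v₀⟩` and of `⟨u, v₁⟩` have
cardinality `1` or `4`, then `v₀ = v₁`. -/
theorem eq_of_braid_pair_of_orbits_four (m : ℕ) (hm : 1 ≤ m)
    (u v₀ v₁ : Equiv.Perm (Fin m))
    (h0 : u * v₀ * u = v₀ * u * v₀) (h1 : u * v₁ * u = v₁ * u * v₁)
    (hcomm : v₀ * v₁ = v₁ * v₀)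
    (hu : u ^ 3 = 1)
    (horb0 : ∀ x : Fin m,
      Nat.card (MulAction.orbit (Subgroup.closure {u, v₀} : Subgroup (Equiv.Perm (Fin m))) x) = 1 ∨
      Nat.card (MulAction.orbit (Subgroup.closure {u, v₀} : Subgroup (Equiv.Perm (Fin m))) x) = 4)
    (horb1 : ∀ x : Fin m,
      Nat.card (MulAction.orbit (Subgroup.closure {u, v₁} : Subgroup (Equiv.Perm (Fin m))) x) = 1 ∨
      Nat.card (MulAction.orbit (Subgroup.closure {u, v₁} : Subgroup (Equiv.Perm (Fin m))) x) = 4) :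
    v₀ = v₁ := by
  have huu : u * u * u = 1 := by rw [← pow_three']; exact hu
  have hu2 : u * u = u⁻¹ := eq_inv_of_mul_eq_one_left huu
  have hiu : u⁻¹ * u⁻¹ = u := by
    rw [← mul_inv_rev, hu2, inv_inv]
  -- cubes of v₀, v₁ (from braid: vᵢ is conjugate to u)
  have hc0 : v₀ = (u * v₀) * u * (u * v₀)⁻¹ := by
    calc v₀ = (v₀ * u * v₀) * (v₀⁻¹ * u⁻¹) := by group
      _ = (u * v₀ * u) * (v₀⁻¹ * u⁻¹) := by rw [h0]
      _ = (u * v₀) * u * (u * v₀)⁻¹ := by group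
  have hc1 : v₁ = (u * v₁) * u * (u * v₁)⁻¹ := by
    calc v₁ = (v₁ * u * v₁) * (v₁⁻¹ * u⁻¹) := by group
      _ = (u * v₁ * u) * (v₁⁻¹ * u⁻¹) := by rw [h1]
      _ = (u * v₁) * u * (u * v₁)⁻¹ := by group
  have hv0 : v₀ * v₀ * v₀ = 1 := by
    have step : v₀ * v₀ * v₀ = (u * v₀) * (u * u * u) * (u * v₀)⁻¹ := by
      conv_lhs => rw [hc0]
      group
    rw [step, huu, mul_one, mul_inv_cancel]
  have hv1 : v₁ * v₁ * v₁ = 1 := by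
    have step : v₁ * v₁ * v₁ = (u * v₁) * (u * u * u) * (u * v₁)⁻¹ := by
      conv_lhs => rw [hc1]
      group
    rw [step, huu, mul_one, mul_inv_cancel]
  -- cube relations from the orbit hypotheses
  have c0 : (u * v₀) * (u * v₀) * (u * v₀) = 1 := braid_cube u v₀ h0 huu horb0
  have c1 : (u * v₁) * (u * v₁) * (u * v₁) = 1 := braid_cube u v₁ h1 huu horb1
  -- (u vᵢ u)² = 1, hence vᵢ u⁻¹ vᵢ = u
  have h20 : (u * v₀ * u) * (u * v₀ * u) = 1 := by
    calc (u * v₀ * u) * (u * v₀ * u) = (u * v₀ * u) * (v₀ * u * v₀) := by rw [h0]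
      _ = (u * v₀) * (u * v₀) * (u * v₀) := by group
      _ = 1 := c0
  have h21 : (u * v₁ * u) * (u * v₁ * u) = 1 := by
    calc (u * v₁ * u) * (u * v₁ * u) = (u * v₁ * u) * (v₁ * u * v₁) := by rw [h1]
      _ = (u * v₁) * (u * v₁) * (u * v₁) := by group
      _ = 1 := c1
  have hq0 : v₀ * u⁻¹ * v₀ = u := by
    have h : v₀ * (u * u) * v₀ = u⁻¹ * u⁻¹ := by
      calc v₀ * (u * u) * v₀ = u⁻¹ * ((u * v₀ * u) * (u * v₀ * u)) * u⁻¹ := by group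
        _ = u⁻¹ * 1 * u⁻¹ := by rw [h20]
        _ = u⁻¹ * u⁻¹ := by group
    rw [hu2, hiu] at h
    exact h
  have hq1 : v₁ * u⁻¹ * v₁ = u := by
    have h : v₁ * (u * u) * v₁ = u⁻¹ * u⁻¹ := by
      calc v₁ * (u * u) * v₁ = u⁻¹ * ((u * v₁ * u) * (u * v₁ * u)) * u⁻¹ := by group
        _ = u⁻¹ * 1 * u⁻¹ := by rw [h21]
        _ = u⁻¹ * u⁻¹ := by group
    rw [hu2, hiu] at h
    exact h
  -- rearranged: u vᵢ⁻¹ u = vᵢ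
  have hr0 : u * v₀⁻¹ * u = v₀ := by
    calc u * v₀⁻¹ * u = u * v₀⁻¹ * (v₀ * u⁻¹ * v₀) := by rw [hq0]
      _ = v₀ := by group
  have hr1 : u * v₁⁻¹ * u = v₁ := by
    calc u * v₁⁻¹ * u = u * v₁⁻¹ * (v₁ * u⁻¹ * v₁) := by rw [hq1]
      _ = v₁ := by group
  -- commutation transfer
  have h5 : (u * v₀⁻¹ * u) * (u * v₁⁻¹ * u) = (u * v₁⁻¹ * u) * (u * v₀⁻¹ * u) := by
    rw [hr0, hr1]; exact hcomm
  have h6 : v₀⁻¹ * (u * u) * v₁⁻¹ = v₁⁻¹ * (u * u) * v₀⁻¹ := by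
    calc v₀⁻¹ * (u * u) * v₁⁻¹
        = u⁻¹ * ((u * v₀⁻¹ * u) * (u * v₁⁻¹ * u)) * u⁻¹ := by group
      _ = u⁻¹ * ((u * v₁⁻¹ * u) * (u * v₀⁻¹ * u)) * u⁻¹ := by rw [h5]
      _ = v₁⁻¹ * (u * u) * v₀⁻¹ := by group
  rw [hu2] at h6
  have h8 : v₁ * (u * v₀) = v₀ * (u * v₁) := by
    have h7 := congrArg Inv.inv h6
    simpa [mul_inv_rev, mul_assoc] using h7
  have h9 : v₀⁻¹ * v₁ * u = u * v₁ * v₀⁻¹ := by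
    calc v₀⁻¹ * v₁ * u = v₀⁻¹ * (v₁ * (u * v₀)) * v₀⁻¹ := by group
      _ = v₀⁻¹ * (v₀ * (u * v₁)) * v₀⁻¹ := by rw [h8]
      _ = u * v₁ * v₀⁻¹ := by group
  have hcomm' : v₀⁻¹ * v₁ = v₁ * v₀⁻¹ := by
    calc v₀⁻¹ * v₁ = v₀⁻¹ * (v₁ * v₀) * v₀⁻¹ := by group
      _ = v₀⁻¹ * (v₀ * v₁) * v₀⁻¹ := by rw [hcomm]
      _ = v₁ * v₀⁻¹ := by group
  have h12 : u⁻¹ * (v₀⁻¹ * v₁) = (v₁ * v₀⁻¹) * u⁻¹ := by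
    calc u⁻¹ * (v₀⁻¹ * v₁) = u⁻¹ * (v₀⁻¹ * v₁ * u) * u⁻¹ := by group
      _ = u⁻¹ * (u * v₁ * v₀⁻¹) * u⁻¹ := by rw [h9]
      _ = (v₁ * v₀⁻¹) * u⁻¹ := by group
  have h10 : (v₀⁻¹ * v₁) * u⁻¹ * (v₁ * v₀⁻¹) = u⁻¹ := by
    calc (v₀⁻¹ * v₁) * u⁻¹ * (v₁ * v₀⁻¹)
        = v₀⁻¹ * (v₁ * u⁻¹ * v₁) * v₀⁻¹ := by group
      _ = v₀⁻¹ * (v₀ * u⁻¹ * v₀) * v₀⁻¹ := by rw [hq0, hq1]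
      _ = u⁻¹ := by group
  have h14 : u⁻¹ * ((v₀⁻¹ * v₁) * (v₁ * v₀⁻¹)) = u⁻¹ * 1 := by
    calc u⁻¹ * ((v₀⁻¹ * v₁) * (v₁ * v₀⁻¹))
        = (u⁻¹ * (v₀⁻¹ * v₁)) * (v₁ * v₀⁻¹) := by group
      _ = ((v₁ * v₀⁻¹) * u⁻¹) * (v₁ * v₀⁻¹) := by rw [h12]
      _ = (v₀⁻¹ * v₁) * u⁻¹ * (v₁ * v₀⁻¹) := by rw [hcomm']
      _ = u⁻¹ := h10
      _ = u⁻¹ * 1 := by rw [mul_one]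
  have h15 : (v₀⁻¹ * v₁) * (v₁ * v₀⁻¹) = 1 := mul_left_cancel h14
  have h16 : v₁ * v₁ = v₀ * v₀ := by
    calc v₁ * v₁ = v₀ * ((v₀⁻¹ * v₁) * (v₁ * v₀⁻¹)) * v₀ := by group
      _ = v₀ * 1 * v₀ := by rw [h15]
      _ = v₀ * v₀ := by group
  have e0 : v₀ = (v₀ * v₀)⁻¹ := by
    apply eq_inv_of_mul_eq_one_left
    rw [← mul_assoc]; exact hv0
  have e1 : v₁ = (v₁ * v₁)⁻¹ := by
    apply eq_inv_of_mul_eq_one_left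
    rw [← mul_assoc]; exact hv1
  rw [e0, e1, h16]
end

section
/- Let m ≥ 1 and let u be a permutation of {1,…,m} with cycle decomposition type (1)^{ℓ₁}(2)^{ℓ₂}⋯(m)^{ℓ_m}, where ℓ₁ is the number of fixed points of u and, for k ≥ 2, ℓ_k is the number of k-cycles of u. If P is a nonabelian subgroup of the centralizer of u in S_m, then there exists k ∈ {1,…,m} such that P contains a proper subgroup of index at most ℓ_k. -/
private theorem aux_index_le {G α : Type*} [Group G] [DecidableEq α]
    (f : G →* Equiv.Perm α) (a : α) (s : Finset α)
    (hs : ∀ g : G, f g a ∈ s) (g0 : G) (hg0 : f g0 a ≠ a) :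
    ∃ Q : Subgroup G, Q ≠ ⊤ ∧ Q.index ≤ s.card := by
  letI : MulAction G α := MulAction.compHom α f
  refine ⟨MulAction.stabilizer G a, ?_, ?_⟩
  · intro h
    exact hg0 (h ▸ Subgroup.mem_top g0 : g0 ∈ MulAction.stabilizer G a)
  · rw [MulAction.index_stabilizer]
    have hsub : MulAction.orbit G a ⊆ ↑s := by
      rintro _ ⟨g, rfl⟩; exact hs g
    calc (MulAction.orbit G a).ncard ≤ (↑s : Set α).ncard :=
          Set.ncard_le_ncard hsub s.finite_toSet
    _ = s.card := Set.ncard_coe_finset s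

/-- Let `u` be a permutation of `{1,…,m}` with cycle decomposition type
`(1)^{ℓ₁}(2)^{ℓ₂}⋯(m)^{ℓ_m}` (so `ℓ₁` is the number of fixed points of `u` and, for
`k ≥ 2`, `ℓ_k` is the number of `k`-cycles of `u`). If `P` is a nonabelian subgroup of
the centralizer of `u`, then for some `k ∈ {1,…,m}` the group `P` contains a proper
subgroup of index at most `ℓ_k`. -/
theorem exists_proper_subgroup_index_le_of_le_centralizer (m : ℕ) (hm : 1 ≤ m)
    (u : Equiv.Perm (Fin m)) (ℓ : ℕ → ℕ)
    (hℓ1 : ℓ 1 = (Finset.univ.filter fun x : Fin m => u x = x).card)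
    (hℓ : ∀ k, 2 ≤ k → ℓ k = u.cycleType.count k)
    (P : Subgroup (Equiv.Perm (Fin m)))
    (hP : P ≤ Subgroup.centralizer {u})
    (hna : ¬ ∀ a b : P, a * b = b * a) :
    ∃ k, 1 ≤ k ∧ k ≤ m ∧ ∃ Q : Subgroup ↥P, Q ≠ ⊤ ∧ Q.index ≤ ℓ k := by
  classical
  have hcomm : ∀ g : P, Commute u (g : Equiv.Perm (Fin m)) := fun g =>
    Subgroup.mem_centralizer_iff.mp (hP g.2) u rfl
  by_cases H1 : ∀ g : P, ∀ x : Fin m, u x = x → (g : Equiv.Perm (Fin m)) x = x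
  · by_cases H2 : ∀ g : P, ∀ c ∈ u.cycleFactorsFinset, Commute (g : Equiv.Perm (Fin m)) c
    · -- P is abelian, contradiction
      exfalso
      apply hna
      intro a b
      have key : ∀ x : Fin m,
          (a : Equiv.Perm (Fin m)) ((b : Equiv.Perm (Fin m)) x)
            = (b : Equiv.Perm (Fin m)) ((a : Equiv.Perm (Fin m)) x) := by
        intro x
        by_cases hux : u x = x
        · simp only [H1 a x hux, H1 b x hux]
        · set c := u.cycleOf x with hcdef
          have hc : c ∈ u.cycleFactorsFinset :=
            Equiv.Perm.cycleOf_mem_cycleFactorsFinset_iff.mpr (Equiv.Perm.mem_support.mpr hux)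
          have hcyc : c.IsCycle := (Equiv.Perm.mem_cycleFactorsFinset_iff.mp hc).1
          have hx : x ∈ c.support :=
            Equiv.Perm.mem_support_cycleOf_iff.mpr
              ⟨Equiv.Perm.SameCycle.refl _ _, Equiv.Perm.mem_support.mpr hux⟩
          have hmemsupp : ∀ g : P, ∀ y ∈ c.support, (g : Equiv.Perm (Fin m)) y ∈ c.support := by
            intro g y hy
            have hgc : (g : Equiv.Perm (Fin m)) * c * (g : Equiv.Perm (Fin m))⁻¹ = c := by
              rw [(H2 g c hc).eq, mul_inv_cancel_right]
            have := Equiv.Perm.support_conj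
              (σ := (g : Equiv.Perm (Fin m))) (τ := c)
            rw [hgc] at this
            rw [this]
            exact Finset.mem_map_of_mem _ hy
          have hpow : ∀ g : P, ∃ j : ℤ, ∀ y ∈ c.support,
              (g : Equiv.Perm (Fin m)) y = (c ^ j) y := by
            intro g
            have hgx := hmemsupp g x hx
            obtain ⟨j, hj⟩ := hcyc.sameCycle (Equiv.Perm.mem_support.mp hx)
              (Equiv.Perm.mem_support.mp hgx)
            refine ⟨j, fun y hy => ?_⟩
            obtain ⟨i, hi⟩ := hcyc.sameCycle (Equiv.Perm.mem_support.mp hx)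
              (Equiv.Perm.mem_support.mp hy)
            have hcom : (g : Equiv.Perm (Fin m)) * c ^ i = c ^ i * (g : Equiv.Perm (Fin m)) :=
              ((H2 g c hc).zpow_right i).eq
            calc (g : Equiv.Perm (Fin m)) y = ((g : Equiv.Perm (Fin m)) * c ^ i) x := by
                  rw [Equiv.Perm.mul_apply, hi]
            _ = (c ^ i) ((g : Equiv.Perm (Fin m)) x) := by rw [hcom, Equiv.Perm.mul_apply]
            _ = (c ^ i) ((c ^ j) x) := by rw [hj]
            _ = (c ^ j) ((c ^ i) x) := by
                  rw [← Equiv.Perm.mul_apply, ← Equiv.Perm.mul_apply, ← zpow_add, ← zpow_add,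
                    add_comm]
            _ = (c ^ j) y := by rw [hi]
          obtain ⟨ja, hja⟩ := hpow a
          obtain ⟨jb, hjb⟩ := hpow b
          have hbx := hmemsupp b x hx
          have hax := hmemsupp a x hx
          calc (a : Equiv.Perm (Fin m)) ((b : Equiv.Perm (Fin m)) x)
              = (c ^ ja) ((c ^ jb) x) := by rw [hja _ hbx, hjb _ hx]
          _ = (c ^ jb) ((c ^ ja) x) := by
                rw [← Equiv.Perm.mul_apply, ← Equiv.Perm.mul_apply, ← zpow_add, ← zpow_add,
                  add_comm]
          _ = (b : Equiv.Perm (Fin m)) ((a : Equiv.Perm (Fin m)) x) := by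
                rw [hjb _ hax, hja _ hx]
      apply Subtype.ext
      simp only [Subgroup.coe_mul]
      exact Equiv.ext key
    · -- some g does not commute with some cycle c of u
      push_neg at H2
      obtain ⟨g, c, hc, hgc⟩ := H2
      set k := c.support.card with hk
      have hcyc : c.IsCycle := (Equiv.Perm.mem_cycleFactorsFinset_iff.mp hc).1
      have hk2 : 2 ≤ k := hcyc.two_le_card_support
      have hkm : k ≤ m := by
        calc k ≤ Fintype.card (Fin m) := Finset.card_le_univ _
        _ = m := Fintype.card_fin m
      -- the finset of k-cycles of u
      set s : Finset (Equiv.Perm (Fin m)) :=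
        u.cycleFactorsFinset.filter (fun d => d.support.card = k) with hs
      have hscard : ℓ k = s.card := by
        rw [hℓ k hk2, Equiv.Perm.cycleType, Multiset.count_map, Finset.card_def, hs,
          Finset.filter_val]
        apply congrArg Multiset.card
        apply Multiset.filter_congr
        intro d _
        simp [Function.comp, eq_comm]
      -- conjugation homomorphism
      let f : P →* Equiv.Perm (Equiv.Perm (Fin m)) :=
        (MulAut.toPerm (Equiv.Perm (Fin m))).comp ((MulAut.conj).comp P.subtype)
      have hf : ∀ h : P, f h c = (h : Equiv.Perm (Fin m)) * c * (h : Equiv.Perm (Fin m))⁻¹ :=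
        fun h => rfl
      have hmem : ∀ h : P, f h c ∈ s := by
        intro h
        rw [hf, hs, Finset.mem_filter]
        constructor
        · have hu : (h : Equiv.Perm (Fin m)) * u * (h : Equiv.Perm (Fin m))⁻¹ = u := by
            rw [← (hcomm h).eq, mul_inv_cancel_right]
          rw [← hu]
          exact (Equiv.Perm.mem_cycleFactorsFinset_conj u (h : Equiv.Perm (Fin m)) c).mpr hc
        · rw [Equiv.Perm.card_support_conj]
      have hne : f g c ≠ c := by
        rw [hf]
        intro h
        apply hgc
        have := mul_inv_eq_iff_eq_mul.mp h
        exact this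
      obtain ⟨Q, hQ, hQi⟩ := aux_index_le f c s hmem g hne
      exact ⟨k, le_trans one_le_two hk2, hkm, Q, hQ, hscard ▸ hQi⟩
  · -- some g moves a fixed point of u
    push_neg at H1
    obtain ⟨g, x, hux, hgx⟩ := H1
    set s : Finset (Fin m) := Finset.univ.filter (fun y : Fin m => u y = y) with hs
    have hmem : ∀ h : P, (h : Equiv.Perm (Fin m)) x ∈ s := by
      intro h
      rw [hs, Finset.mem_filter]
      refine ⟨Finset.mem_univ _, ?_⟩
      have : u ((h : Equiv.Perm (Fin m)) x) = (h : Equiv.Perm (Fin m)) (u x) := by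
        rw [← Equiv.Perm.mul_apply, ← Equiv.Perm.mul_apply, (hcomm h).eq]
      rw [this, hux]
    obtain ⟨Q, hQ, hQi⟩ := aux_index_le P.subtype x s hmem g hgx
    exact ⟨1, le_refl 1, hm, Q, hQ, by rw [hℓ1]; exact hQi⟩
end

section
/- Let g ≥ 4 and let r be a divisor of g with 2 ≤ r ≤ g, and set k = g/r. Then r! · 2^{g²/r} · (∏_{i=1}^{k} (2^{2i} − 1))^r < 2^{g²−g} · (2^g + 1) · ∏_{i=1}^{g−1} (2^{2i} − 1). (This says that the order of the maximal subgroup Sp_{2k}(F₂) ≀ S_r of Sp_{2g}(F₂) is less than half the order of O⁻_{2g}(F₂), whose order is 2^{g²−g+1}(2^g + 1)∏_{i=1}^{g−1}(2^{2i} − 1).) -/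
open Finset in
lemma wreath_prod_upper (n : ℕ) :
    (∏ i ∈ Finset.Icc 1 n, (2 ^ (2 * i) - 1)) ≤ 2 ^ (n * n + n) := by
  induction n with
  | zero => simp
  | succ n ih =>
    rw [Finset.prod_Icc_succ_top (by omega)]
    calc (∏ i ∈ Finset.Icc 1 n, (2 ^ (2 * i) - 1)) * (2 ^ (2 * (n + 1)) - 1)
        ≤ 2 ^ (n * n + n) * 2 ^ (2 * (n + 1)) := Nat.mul_le_mul ih (Nat.sub_le _ _)
      _ = 2 ^ ((n + 1) * (n + 1) + (n + 1)) := by rw [← pow_add]; congr 1; ring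

open Finset in
lemma wreath_prod_lower (n : ℕ) :
    3 ^ n * 2 ^ (n * n - n) ≤ ∏ i ∈ Finset.Icc 1 n, (2 ^ (2 * i) - 1) := by
  induction n with
  | zero => simp
  | succ n ih =>
    rw [Finset.prod_Icc_succ_top (by omega)]
    have h3 : 3 * 2 ^ (2 * n) ≤ 2 ^ (2 * (n + 1)) - 1 := by
      have : (2:ℕ) ^ (2 * (n + 1)) = 4 * 2 ^ (2 * n) := by
        rw [show 2 * (n + 1) = 2 * n + 2 by ring, pow_add]; ring
      have h1 : (1:ℕ) ≤ 2 ^ (2 * n) := Nat.one_le_two_pow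
      omega
    have he : n * n - n + 2 * n = (n + 1) * (n + 1) - (n + 1) := by
      have hq : (n + 1) * (n + 1) = n * n + 2 * n + 1 := by ring
      have hnn : n ≤ n * n := by nlinarith
      omega
    calc 3 ^ (n + 1) * 2 ^ ((n + 1) * (n + 1) - (n + 1))
        = (3 ^ n * 2 ^ (n * n - n)) * (3 * 2 ^ (2 * n)) := by
          rw [show 3 ^ (n + 1) = 3 ^ n * 3 by ring]
          rw [← he, pow_add]; ring
      _ ≤ (∏ i ∈ Finset.Icc 1 n, (2 ^ (2 * i) - 1)) * (2 ^ (2 * (n + 1)) - 1) :=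
          Nat.mul_le_mul ih h3

lemma wreath_fact_bound (g : ℕ) (hg : 4 ≤ g) :
    g.factorial * 2 ^ (4 * g) ≤ 3 ^ (g - 1) * 2 ^ (g * g + 2) := by
  induction g, hg using Nat.le_induction with
  | base => norm_num [Nat.factorial]
  | succ n hn ih =>
    have h16 : (n + 1) * 2 ^ 4 ≤ 3 * 2 ^ (2 * n + 1) := by
      have hlt : n < 2 ^ n := Nat.lt_two_pow_self
      calc (n + 1) * 2 ^ 4 ≤ 2 ^ n * 2 ^ 4 := Nat.mul_le_mul_right _ (by omega)
        _ = 2 ^ (n + 4) := by rw [← pow_add]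
        _ ≤ 2 ^ (2 * n + 1) := Nat.pow_le_pow_right (by norm_num) (by omega)
        _ ≤ 3 * 2 ^ (2 * n + 1) := Nat.le_mul_of_pos_left _ (by norm_num)
    calc (n + 1).factorial * 2 ^ (4 * (n + 1))
        = (n.factorial * 2 ^ (4 * n)) * ((n + 1) * 2 ^ 4) := by
          rw [Nat.factorial_succ]; rw [show 4 * (n + 1) = 4 * n + 4 by ring, pow_add]; ring
      _ ≤ (3 ^ (n - 1) * 2 ^ (n * n + 2)) * (3 * 2 ^ (2 * n + 1)) := Nat.mul_le_mul ih h16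
      _ = 3 ^ ((n + 1) - 1) * 2 ^ ((n + 1) * (n + 1) + 2) := by
          rw [show (n + 1) - 1 = (n - 1) + 1 by omega]
          rw [show (n + 1) * (n + 1) + 2 = (n * n + 2) + (2 * n + 1) by ring]
          rw [pow_add, pow_add]; ring

/-- For `g ≥ 4` and a divisor `r` of `g` with `2 ≤ r ≤ g` (and `k = g / r`), the order
`r!·2^{g²/r}·(∏_{i=1}^{k}(2^{2i} − 1))^r` of the maximal subgroup `Sp_{2k}(F₂) ≀ S_r` of
`Sp_{2g}(F₂)` is less than half of the order `2^{g²−g+1}(2^g + 1)·∏_{i=1}^{g−1}(2^{2i} − 1)`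
of `O⁻_{2g}(F₂)`. -/
theorem wreath_order_lt_half_o_minus_order (g r : ℕ) (hg : 4 ≤ g)
    (hr2 : 2 ≤ r) (hrg : r ≤ g) (hdvd : r ∣ g) :
    r.factorial * 2 ^ (g ^ 2 / r) * (∏ i ∈ Finset.Icc 1 (g / r), (2 ^ (2 * i) - 1)) ^ r <
      2 ^ (g ^ 2 - g) * (2 ^ g + 1) * ∏ i ∈ Finset.Icc 1 (g - 1), (2 ^ (2 * i) - 1) := by
  obtain ⟨k, hk⟩ := hdvd
  have hr0 : 0 < r := by omega
  have hk0 : 0 < k := by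
    rcases Nat.eq_zero_or_pos k with h | h
    · subst h; simp at hk; omega
    · exact h
  have hdiv1 : g / r = k := by rw [hk, Nat.mul_div_cancel_left _ hr0]
  have hgg : g ^ 2 = r * (k * g) := by rw [pow_two]; nth_rewrite 1 [hk]; ring
  have hdiv2 : g ^ 2 / r = k * g := by rw [hgg, Nat.mul_div_cancel_left _ hr0]
  rw [hdiv1, hdiv2, pow_two]
  apply Nat.lt_of_mul_lt_mul_left (a := 2 ^ (4 * g))
  have hPkr : (∏ i ∈ Finset.Icc 1 k, (2 ^ (2 * i) - 1)) ^ r ≤ 2 ^ (k * g + g) := by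
    calc (∏ i ∈ Finset.Icc 1 k, (2 ^ (2 * i) - 1)) ^ r
        ≤ (2 ^ (k * k + k)) ^ r := Nat.pow_le_pow_left (wreath_prod_upper k) r
      _ = 2 ^ ((k * k + k) * r) := by rw [← pow_mul]
      _ = 2 ^ (k * g + g) := by congr 1; rw [hk]; ring
  have h2kg : k * g + (k * g + g) ≤ g * g + g := by
    have h2k : 2 * k ≤ g := by rw [hk]; nlinarith
    nlinarith
  have h2 : (g - 1) * (g - 1) + 2 * g = g * g + 1 := by
    obtain ⟨m, rfl⟩ : ∃ m, g = m + 1 := ⟨g - 1, by omega⟩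
    simp [Nat.add_sub_cancel]; ring
  have h1 : 3 * g ≤ g * g := by nlinarith
  have he : 4 * g + (g * g - g) + ((g - 1) * (g - 1) - (g - 1)) = 2 * (g * g) + 2 := by omega
  calc 2 ^ (4 * g) * (r.factorial * 2 ^ (k * g) *
        (∏ i ∈ Finset.Icc 1 k, (2 ^ (2 * i) - 1)) ^ r)
      ≤ 2 ^ (4 * g) * (g.factorial * 2 ^ (k * g) * 2 ^ (k * g + g)) := by
        gcongr
    _ = g.factorial * 2 ^ (4 * g) * 2 ^ (k * g + (k * g + g)) := by rw [pow_add]; ring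
    _ ≤ g.factorial * 2 ^ (4 * g) * 2 ^ (g * g + g) := by gcongr; omega
    _ ≤ (3 ^ (g - 1) * 2 ^ (g * g + 2)) * 2 ^ (g * g + g) :=
        Nat.mul_le_mul_right _ (wreath_fact_bound g hg)
    _ = 3 ^ (g - 1) * (2 ^ (2 * (g * g) + 2) * 2 ^ g) := by
        rw [show 2 * (g * g) + 2 = (g * g + 2) + (g * g) by ring, pow_add, pow_add]; ring
    _ < 3 ^ (g - 1) * (2 ^ (2 * (g * g) + 2) * (2 ^ g + 1)) := by
        gcongr
        omega
    _ = (2 ^ (4 * g) * 2 ^ (g * g - g) * (2 ^ g + 1)) *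
          (3 ^ (g - 1) * 2 ^ ((g - 1) * (g - 1) - (g - 1))) := by
        rw [show (2:ℕ) ^ (2 * (g * g) + 2)
            = 2 ^ (4 * g) * 2 ^ (g * g - g) * 2 ^ ((g - 1) * (g - 1) - (g - 1)) by
          rw [← pow_add, ← pow_add, he]]
        ring
    _ ≤ (2 ^ (4 * g) * 2 ^ (g * g - g) * (2 ^ g + 1)) *
          (∏ i ∈ Finset.Icc 1 (g - 1), (2 ^ (2 * i) - 1)) :=
        Nat.mul_le_mul_left _ (wreath_prod_lower (g - 1))
    _ = 2 ^ (4 * g) * (2 ^ (g * g - g) * (2 ^ g + 1) *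
          ∏ i ∈ Finset.Icc 1 (g - 1), (2 ^ (2 * i) - 1)) := by ring
end

section
/- Let g ≥ 4 and let k be an integer with 1 ≤ k ≤ g − 1. Then 2^{g² + 2k² − 2gk} · (∏_{i=1}^{g−k} (2^{2i} − 1)) · (∏_{i=1}^{k} (2^{2i} − 1)) < 2^{g²−g} · (2^g + 1) · ∏_{i=1}^{g−1} (2^{2i} − 1). (This says that the order of the maximal subgroup Sp_{2k}(F₂) × Sp_{2g−2k}(F₂) of Sp_{2g}(F₂) is less than half the order of O⁻_{2g}(F₂), whose order is 2^{g²−g+1}(2^g + 1)∏_{i=1}^{g−1}(2^{2i} − 1).) -/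
open Finset

private lemma prod_le_aux (n : ℕ) :
    (∏ i ∈ Icc 1 n, (2 ^ (2 * i) - 1)) ≤ 2 ^ (n ^ 2 + n) := by
  induction n with
  | zero => simp
  | succ n ih =>
    rw [Finset.prod_Icc_succ_top (by omega : 1 ≤ n + 1)]
    calc (∏ i ∈ Icc 1 n, (2 ^ (2 * i) - 1)) * (2 ^ (2 * (n + 1)) - 1)
        ≤ 2 ^ (n ^ 2 + n) * 2 ^ (2 * (n + 1)) := Nat.mul_le_mul ih (Nat.sub_le _ _)
      _ = 2 ^ ((n + 1) ^ 2 + (n + 1)) := by rw [← pow_add]; congr 1; ring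

private lemma prod_ge_aux (n : ℕ) :
    2 ^ (n ^ 2) ≤ ∏ i ∈ Icc 1 n, (2 ^ (2 * i) - 1) := by
  induction n with
  | zero => simp
  | succ n ih =>
    rw [Finset.prod_Icc_succ_top (by omega : 1 ≤ n + 1)]
    have h1 : 2 ^ (2 * n + 1) ≤ 2 ^ (2 * (n + 1)) - 1 := by
      have h : 2 ^ (2 * (n + 1)) = 2 * 2 ^ (2 * n + 1) := by
        ring
      omega
    calc 2 ^ ((n + 1) ^ 2) = 2 ^ (n ^ 2) * 2 ^ (2 * n + 1) := by
          rw [← pow_add]; congr 1; ring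
      _ ≤ _ := Nat.mul_le_mul ih h1

private lemma key_aux (m k : ℕ) (hm : 1 ≤ m) (hk : 1 ≤ k) (hs : 4 ≤ m + k) :
    3 * m + 3 * k ≤ 4 * m * k := by
  rcases Nat.lt_or_ge m 2 with h | h
  · have hm1 : m = 1 := by omega
    subst hm1; omega
  rcases Nat.lt_or_ge k 2 with h' | h'
  · have hk1 : k = 1 := by omega
    subst hk1; omega
  · have h1 : 3 * m ≤ (2 * k) * m := Nat.mul_le_mul (by omega) le_rfl
    have h2 : 3 * k ≤ (2 * m) * k := Nat.mul_le_mul (by omega) le_rfl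
    nlinarith [h1, h2]

/-- For `g ≥ 4` and `1 ≤ k ≤ g − 1`, the order
`2^{g²+2k²−2gk}·(∏_{i=1}^{g−k}(2^{2i} − 1))·(∏_{i=1}^{k}(2^{2i} − 1))` of the maximal
subgroup `Sp_{2k}(F₂) × Sp_{2g−2k}(F₂)` of `Sp_{2g}(F₂)` is less than half of the order
`2^{g²−g+1}(2^g + 1)·∏_{i=1}^{g−1}(2^{2i} − 1)` of `O⁻_{2g}(F₂)`. -/
theorem product_order_lt_half_o_minus_order (g k : ℕ) (hg : 4 ≤ g)
    (hk1 : 1 ≤ k) (hkg : k ≤ g - 1) :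
    2 ^ (g ^ 2 + 2 * k ^ 2 - 2 * g * k) *
        (∏ i ∈ Finset.Icc 1 (g - k), (2 ^ (2 * i) - 1)) *
        (∏ i ∈ Finset.Icc 1 k, (2 ^ (2 * i) - 1)) <
      2 ^ (g ^ 2 - g) * (2 ^ g + 1) * ∏ i ∈ Finset.Icc 1 (g - 1), (2 ^ (2 * i) - 1) := by
  obtain ⟨m, hm, rfl⟩ : ∃ m, 1 ≤ m ∧ g = k + m := ⟨g - k, by omega, by omega⟩
  have hgk : k + m - k = m := by omega
  have hexp : (k + m) ^ 2 + 2 * k ^ 2 - 2 * (k + m) * k = m ^ 2 + k ^ 2 := by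
    have h : (k + m) ^ 2 + 2 * k ^ 2 = (m ^ 2 + k ^ 2) + 2 * (k + m) * k := by ring
    omega
  rw [hgk, hexp]
  have hL : 2 ^ (m ^ 2 + k ^ 2) * (∏ i ∈ Icc 1 m, (2 ^ (2 * i) - 1)) *
      (∏ i ∈ Icc 1 k, (2 ^ (2 * i) - 1)) ≤ 2 ^ (2 * m ^ 2 + 2 * k ^ 2 + m + k) := by
    calc 2 ^ (m ^ 2 + k ^ 2) * (∏ i ∈ Icc 1 m, (2 ^ (2 * i) - 1)) *
        (∏ i ∈ Icc 1 k, (2 ^ (2 * i) - 1))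
        ≤ 2 ^ (m ^ 2 + k ^ 2) * 2 ^ (m ^ 2 + m) * 2 ^ (k ^ 2 + k) :=
          Nat.mul_le_mul (Nat.mul_le_mul le_rfl (prod_le_aux m)) (prod_le_aux k)
      _ = 2 ^ (2 * m ^ 2 + 2 * k ^ 2 + m + k) := by
          rw [← pow_add, ← pow_add]; congr 1; ring
  have h1 : k + m ≤ (k + m) ^ 2 := Nat.le_self_pow (by norm_num) _
  have hR : 2 ^ ((k + m) ^ 2 + (k + m - 1) ^ 2) ≤
      2 ^ ((k + m) ^ 2 - (k + m)) * (2 ^ (k + m) + 1) *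
        ∏ i ∈ Icc 1 (k + m - 1), (2 ^ (2 * i) - 1) := by
    calc 2 ^ ((k + m) ^ 2 + (k + m - 1) ^ 2)
        = 2 ^ ((k + m) ^ 2 - (k + m)) * 2 ^ (k + m) * 2 ^ ((k + m - 1) ^ 2) := by
          rw [← pow_add, ← pow_add]; congr 1; omega
      _ ≤ _ := Nat.mul_le_mul (Nat.mul_le_mul le_rfl (by omega)) (prod_ge_aux _)
  have hmid : 2 ^ (2 * m ^ 2 + 2 * k ^ 2 + m + k) <
      2 ^ ((k + m) ^ 2 + (k + m - 1) ^ 2) := by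
    apply Nat.pow_lt_pow_right (by norm_num)
    have hkey := key_aux m k hm hk1 (by omega)
    have hsq : (k + m - 1) ^ 2 + 2 * (k + m) = (k + m) ^ 2 + 1 := by
      obtain ⟨u, hu⟩ : ∃ u, k + m = u + 1 := ⟨k + m - 1, by omega⟩
      rw [hu]
      simp only [Nat.add_sub_cancel]
      ring
    have hexpand : (k + m) ^ 2 = m ^ 2 + 2 * (m * k) + k ^ 2 := by ring
    have hmk : 4 * m * k = 4 * (m * k) := by ring
    linarith [hkey, hsq, hexpand, hmk]
  exact lt_of_le_of_lt hL (lt_of_lt_of_le hmid hR)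
end
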